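/- Let L > 0 and \omega > 0 be real numbers, and let u : \mathbb{R} \to \mathbb{R} be twice continuously differentiable with u''(x) = (\omega^2 x^2 + \omega)\,u(x) for all x \in [0,L], u(0) = 0 and u'(0) = 1. Then u(L) = e^{\omega L^2/2} \int_0^L e^{-\omega y^2}\,dy. -/

import Mathlib

/-- For the harmonic oscillator on a finite interval (supersymmetric Hamiltonian
with superpotential `φ(x) = ωx`): if `u'' = (ω²x² + ω)u` on `[0, L]` with
`u(0) = 0`, `u'(0) = 1`, then `u(L) = e^{ωL²/2} ∫₀ᴸ e^{-ωy²} dy`. -/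
theorem stmt_14 (L ω : ℝ) (hL : 0 < L) (hω : 0 < ω)
    (u : ℝ → ℝ) (hu : ContDiff ℝ 2 u)
    (hode : ∀ x ∈ Set.Icc 0 L, deriv (deriv u) x = (ω ^ 2 * x ^ 2 + ω) * u x)
    (hu0 : u 0 = 0) (hu0' : deriv u 0 = 1) :
    u L = Real.exp (ω * L ^ 2 / 2) * ∫ y in (0:ℝ)..L, Real.exp (-ω * y ^ 2) := by
  have hu' : ContDiff ℝ 1 (deriv u) := by
    have hu2 : ContDiff ℝ ((1 : ℕ) + 1 : ℕ) u := by
      exact_mod_cast hu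
    exact (contDiff_succ_iff_deriv.mp hu2).2.2
  have hud : Differentiable ℝ u := hu.differentiable (by norm_num)
  have hud' : Differentiable ℝ (deriv u) := hu'.differentiable one_ne_zero
  -- derivative of the quadratic exponent
  have hq : ∀ x : ℝ, HasDerivAt (fun x : ℝ => ω * x ^ 2 / 2) (ω * x) x := by
    intro x
    have := (((hasDerivAt_pow 2 x).const_mul ω).div_const 2)
    convert this using 1 <;> try rfl
    ring
  have hg : ∀ x : ℝ, HasDerivAt (fun x : ℝ => Real.exp (ω * x ^ 2 / 2))
      (ω * x * Real.exp (ω * x ^ 2 / 2)) x := by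
    intro x
    simpa [mul_comm] using (hq x).exp
  -- the Wronskian with the explicit solution exp(ω x²/2)
  set W : ℝ → ℝ := fun x =>
    deriv u x * Real.exp (ω * x ^ 2 / 2) - u x * (ω * x * Real.exp (ω * x ^ 2 / 2)) with hWdef
  have hWderiv : ∀ x ∈ Set.Icc (0:ℝ) L, HasDerivAt W 0 x := by
    intro x hx
    have h1 : HasDerivAt (fun x => deriv u x * Real.exp (ω * x ^ 2 / 2))
        (deriv (deriv u) x * Real.exp (ω * x ^ 2 / 2)
          + deriv u x * (ω * x * Real.exp (ω * x ^ 2 / 2))) x :=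
      ((hud' x).hasDerivAt).mul (hg x)
    have h2' : HasDerivAt (fun x : ℝ => ω * x * Real.exp (ω * x ^ 2 / 2))
        (ω * Real.exp (ω * x ^ 2 / 2) + ω * x * (ω * x * Real.exp (ω * x ^ 2 / 2))) x := by
      have := ((hasDerivAt_id x).const_mul ω).mul (hg x)
      simpa [Pi.mul_def] using this
    have h2 : HasDerivAt (fun x => u x * (ω * x * Real.exp (ω * x ^ 2 / 2)))
        (deriv u x * (ω * x * Real.exp (ω * x ^ 2 / 2))
          + u x * (ω * Real.exp (ω * x ^ 2 / 2) + ω * x * (ω * x * Real.exp (ω * x ^ 2 / 2)))) x :=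
      ((hud x).hasDerivAt).mul h2'
    have := h1.sub h2
    convert this using 1 <;> try rfl
    rw [hode x hx]
    ring
  have hWcont : ContinuousOn W (Set.Icc 0 L) := by
    apply Continuous.continuousOn
    fun_prop
  have hWconst : ∀ x ∈ Set.Icc (0:ℝ) L, W x = 1 := by
    have := constant_of_has_deriv_right_zero (f := W) (a := 0) (b := L) hWcont
      (fun x hx => ((hWderiv x (Set.mem_Ico.mp hx |> fun h => ⟨h.1, le_of_lt h.2⟩)).hasDerivWithinAt))
    intro x hx
    have hW0 : W 0 = 1 := by
      simp [hWdef, hu0, hu0']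
    rw [this x hx, hW0]
  -- f = u * exp(-ω x²/2) has derivative exp(-ω x²) on [0,L]
  set f : ℝ → ℝ := fun x => u x * Real.exp (-(ω * x ^ 2 / 2)) with hfdef
  have hf : ∀ x ∈ Set.Icc (0:ℝ) L, HasDerivAt f (Real.exp (-ω * x ^ 2)) x := by
    intro x hx
    have hgneg : HasDerivAt (fun x : ℝ => Real.exp (-(ω * x ^ 2 / 2)))
        (-(ω * x) * Real.exp (-(ω * x ^ 2 / 2))) x := by
      simpa [mul_comm] using ((hq x).neg).exp
    have h1 : HasDerivAt f
        (deriv u x * Real.exp (-(ω * x ^ 2 / 2))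
          + u x * (-(ω * x) * Real.exp (-(ω * x ^ 2 / 2)))) x :=
      ((hud x).hasDerivAt).mul hgneg
    convert h1 using 1
    have hW := hWconst x hx
    have key : deriv u x - u x * (ω * x) = Real.exp (-(ω * x ^ 2 / 2)) := by
      have hpos : Real.exp (ω * x ^ 2 / 2) ≠ 0 := (Real.exp_pos _).ne'
      have : (deriv u x - u x * (ω * x)) * Real.exp (ω * x ^ 2 / 2) = 1 := by
        rw [← hW]; simp [hWdef]; ring
      rw [Real.exp_neg]
      field_simp at this ⊢
      linarith [this]
    have : Real.exp (-ω * x ^ 2) = Real.exp (-(ω * x ^ 2 / 2)) * Real.exp (-(ω * x ^ 2 / 2)) := by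
      rw [← Real.exp_add]; ring_nf
    rw [this, ← key]
    ring
  -- fundamental theorem of calculus
  have hInt : IntervalIntegrable (fun y => Real.exp (-ω * y ^ 2)) MeasureTheory.volume 0 L :=
    (Continuous.intervalIntegrable (by fun_prop) 0 L)
  have hFTC : (∫ y in (0:ℝ)..L, Real.exp (-ω * y ^ 2)) = f L - f 0 := by
    apply intervalIntegral.integral_eq_sub_of_hasDerivAt
    · intro x hx
      rw [Set.uIcc_of_le hL.le] at hx
      exact hf x hx
    · exact hInt
  have hf0 : f 0 = 0 := by simp [hfdef, hu0]
  rw [hFTC, hf0, sub_zero, hfdef]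
  simp only
  rw [← mul_assoc, mul_comm (Real.exp _) (u L), mul_assoc, ← Real.exp_add]
  simp
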